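/- arXiv:1401.7264 — 3 statements merged into one kernel-verified Lean document; each statement's English description precedes it below -/
import Mathlib

section
/- Let $U_1$ and $U_2$ be real random variables with density functions $f_{U_1}$ and $f_{U_2}$, and let $S$ be a measurable set with $\int_S f_{U_1} > 0$ and $\int_S f_{U_2} > 0$. Let $W_1$ and $W_2$ have the distributions of $U_1$ and $U_2$ conditioned to lie in $S$. Then $d_{TV}(W_1, W_2) \leq d_{TV}(U_1, U_2) / \min(\int_S f_{U_1}, \int_S f_{U_2})$. -/
open MeasureTheory

/-- Total variation distance between two measures. -/
noncomputable def tvDist {Ω : Type*} [MeasurableSpace Ω] (μ ν : Measure Ω) : ℝ :=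
  ⨆ A : {A : Set Ω // MeasurableSet A}, |(μ A.1).toReal - (ν A.1).toReal|

lemma key_ineq (a b p q D : ℝ) (ha : 0 < a) (hb : 0 < b) (hp0 : 0 ≤ p) (hq0 : 0 ≤ q)
    (hpa : p ≤ a) (hqb : q ≤ b) (h1 : p - q ≤ D) (h2 : q - p ≤ D)
    (h3 : (b - q) - (a - p) ≤ D) (h4 : (a - p) - (b - q) ≤ D) :
    |p / a - q / b| ≤ D / min a b := by
  have hm : 0 < min a b := lt_min ha hb
  rw [abs_sub_le_iff]
  constructor <;> rcases le_total a b with h | h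
  · rw [min_eq_left h, div_sub_div _ _ ha.ne' hb.ne', div_le_div_iff₀ (by positivity) ha]
    nlinarith [mul_nonneg (mul_nonneg (sub_nonneg.2 hqb) (sub_nonneg.2 h)) ha.le,
      mul_le_mul_of_nonneg_right (mul_le_mul_of_nonneg_left h3 hb.le) ha.le]
  · rw [min_eq_right h, div_sub_div _ _ ha.ne' hb.ne', div_le_div_iff₀ (by positivity) hb]
    nlinarith [mul_nonneg (mul_nonneg hp0 (sub_nonneg.2 h)) hb.le,
      mul_le_mul_of_nonneg_right (mul_le_mul_of_nonneg_left h1 ha.le) hb.le]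
  · rw [min_eq_left h, div_sub_div _ _ hb.ne' ha.ne', div_le_div_iff₀ (by positivity) ha]
    nlinarith [mul_nonneg (mul_nonneg hq0 (sub_nonneg.2 h)) ha.le,
      mul_le_mul_of_nonneg_right (mul_le_mul_of_nonneg_left h2 hb.le) ha.le]
  · rw [min_eq_right h, div_sub_div _ _ hb.ne' ha.ne', div_le_div_iff₀ (by positivity) hb]
    nlinarith [mul_nonneg (mul_nonneg (sub_nonneg.2 hpa) (sub_nonneg.2 h)) hb.le,
      mul_le_mul_of_nonneg_right (mul_le_mul_of_nonneg_left h4 ha.le) hb.le]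

theorem stmt_0 (f₁ f₂ : ℝ → ℝ) (hf₁ : Measurable f₁) (hf₂ : Measurable f₂)
    (hf₁0 : ∀ x, 0 ≤ f₁ x) (hf₂0 : ∀ x, 0 ≤ f₂ x)
    (hf₁1 : ∫ x, f₁ x = 1) (hf₂1 : ∫ x, f₂ x = 1)
    (S : Set ℝ) (hS : MeasurableSet S)
    (hS₁ : 0 < ∫ x in S, f₁ x) (hS₂ : 0 < ∫ x in S, f₂ x)
    (U₁ U₂ W₁ W₂ : Measure ℝ)
    (hU₁ : U₁ = volume.withDensity (fun x => ENNReal.ofReal (f₁ x)))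
    (hU₂ : U₂ = volume.withDensity (fun x => ENNReal.ofReal (f₂ x)))
    (hW₁ : W₁ = volume.withDensity
      (fun x => ENNReal.ofReal (S.indicator f₁ x / ∫ y in S, f₁ y)))
    (hW₂ : W₂ = volume.withDensity
      (fun x => ENNReal.ofReal (S.indicator f₂ x / ∫ y in S, f₂ y))) :
    tvDist W₁ W₂ ≤ tvDist U₁ U₂ / min (∫ x in S, f₁ x) (∫ x in S, f₂ x) := by
  set a := ∫ x in S, f₁ x with ha_def
  set b := ∫ x in S, f₂ x with hb_def
  have hi₁ : Integrable f₁ := by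
    by_contra h
    rw [integral_undef h] at hf₁1; norm_num at hf₁1
  have hi₂ : Integrable f₂ := by
    by_contra h
    rw [integral_undef h] at hf₂1; norm_num at hf₂1
  -- general: toReal of withDensity value
  have key : ∀ (f : ℝ → ℝ), Integrable f → (∀ x, 0 ≤ f x) → ∀ T : Set ℝ, MeasurableSet T →
      ((volume.withDensity (fun x => ENNReal.ofReal (f x))) T).toReal = ∫ x in T, f x := by
    intro f hi hf0 T hT
    rw [withDensity_apply _ hT,
      ← ofReal_integral_eq_lintegral_ofReal hi.integrableOn
        (ae_restrict_of_ae (Filter.Eventually.of_forall hf0)),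
      ENNReal.toReal_ofReal (setIntegral_nonneg hT fun x _ => hf0 x)]
  have hμ₁ : ∀ T : Set ℝ, MeasurableSet T → (U₁ T).toReal = ∫ x in T, f₁ x := by
    intro T hT; rw [hU₁]; exact key f₁ hi₁ hf₁0 T hT
  have hμ₂ : ∀ T : Set ℝ, MeasurableSet T → (U₂ T).toReal = ∫ x in T, f₂ x := by
    intro T hT; rw [hU₂]; exact key f₂ hi₂ hf₂0 T hT
  -- W₁ values
  have hg₁ : Integrable (fun x => S.indicator f₁ x / a) := (hi₁.indicator hS).div_const a
  have hg₂ : Integrable (fun x => S.indicator f₂ x / b) := (hi₂.indicator hS).div_const b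
  have hg₁0 : ∀ x, 0 ≤ S.indicator f₁ x / a :=
    fun x => div_nonneg (Set.indicator_nonneg (fun y _ => hf₁0 y) x) hS₁.le
  have hg₂0 : ∀ x, 0 ≤ S.indicator f₂ x / b :=
    fun x => div_nonneg (Set.indicator_nonneg (fun y _ => hf₂0 y) x) hS₂.le
  have hν₁ : ∀ T : Set ℝ, MeasurableSet T → (W₁ T).toReal = (∫ x in T ∩ S, f₁ x) / a := by
    intro T hT
    rw [hW₁, key _ hg₁ hg₁0 T hT]
    simp_rw [div_eq_mul_inv, integral_mul_const, setIntegral_indicator hS]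
  have hν₂ : ∀ T : Set ℝ, MeasurableSet T → (W₂ T).toReal = (∫ x in T ∩ S, f₂ x) / b := by
    intro T hT
    rw [hW₂, key _ hg₂ hg₂0 T hT]
    simp_rw [div_eq_mul_inv, integral_mul_const, setIntegral_indicator hS]
  -- BddAbove for tvDist U₁ U₂
  have hbdd : BddAbove (Set.range fun A : {A : Set ℝ // MeasurableSet A} =>
      |(U₁ A.1).toReal - (U₂ A.1).toReal|) := by
    refine ⟨2, ?_⟩
    rintro x ⟨⟨A, hA⟩, rfl⟩
    have h1 : (U₁ A).toReal ≤ 1 := by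
      rw [hμ₁ A hA, ← hf₁1]
      exact setIntegral_le_integral hi₁ (Filter.Eventually.of_forall hf₁0)
    have h2 : (U₂ A).toReal ≤ 1 := by
      rw [hμ₂ A hA, ← hf₂1]
      exact setIntegral_le_integral hi₂ (Filter.Eventually.of_forall hf₂0)
    have h3 : 0 ≤ (U₁ A).toReal := ENNReal.toReal_nonneg
    have h4 : 0 ≤ (U₂ A).toReal := ENNReal.toReal_nonneg
    simp only
    rw [abs_le]; constructor <;> linarith
  have hD : ∀ T : Set ℝ, MeasurableSet T →
      |(∫ x in T, f₁ x) - ∫ x in T, f₂ x| ≤ tvDist U₁ U₂ := by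
    intro T hT
    have := le_ciSup hbdd (⟨T, hT⟩ : {A : Set ℝ // MeasurableSet A})
    rwa [hμ₁ T hT, hμ₂ T hT] at this
  -- main bound
  refine ciSup_le ?_
  rintro ⟨A, hA⟩
  rw [hν₁ A hA, hν₂ A hA]
  set p := ∫ x in A ∩ S, f₁ x with hp_def
  set q := ∫ x in A ∩ S, f₂ x with hq_def
  have hAS : MeasurableSet (A ∩ S) := hA.inter hS
  have hd₁ : ∫ x in S \ (A ∩ S), f₁ x = a - p :=
    integral_diff hAS hi₁.integrableOn Set.inter_subset_right
  have hd₂ : ∫ x in S \ (A ∩ S), f₂ x = b - q :=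
    integral_diff hAS hi₂.integrableOn Set.inter_subset_right
  have h12 := hD (A ∩ S) hAS
  have h34 := hD (S \ (A ∩ S)) (hS.diff hAS)
  rw [hd₁, hd₂] at h34
  rw [abs_sub_le_iff] at h12 h34
  refine key_ineq a b p q _ hS₁ hS₂ ?_ ?_ ?_ ?_ h12.1 h12.2 h34.2 h34.1
  · exact setIntegral_nonneg hAS fun x _ => hf₁0 x
  · exact setIntegral_nonneg hAS fun x _ => hf₂0 x
  · exact setIntegral_mono_set hi₁.integrableOn
      (ae_restrict_of_ae (Filter.Eventually.of_forall hf₁0))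
      (HasSubset.Subset.eventuallyLE Set.inter_subset_right)
  · exact setIntegral_mono_set hi₂.integrableOn
      (ae_restrict_of_ae (Filter.Eventually.of_forall hf₂0))
      (HasSubset.Subset.eventuallyLE Set.inter_subset_right)
end

section
/- Let $U_1 \sim Normal(m_1, \tilde\sigma^2)$ and $U_2 \sim Normal(m_2, \tilde\sigma^2)$ where $m_\ell = (\sigma^{-2} + n\gamma^2)^{-1}(\sigma^{-2} y + \gamma^2 s_\ell)$ for $\ell=1,2$, with $\tilde\sigma^2 = (\sigma^{-2}+n\gamma^2)^{-1}$. Let $W_1, W_2$ be $U_1, U_2$ conditioned to lie in $[0,1]$. If $|m_1|, |m_2| \leq \zeta$ for some $\zeta \geq 0$, then $d_{TV}(W_1, W_2) \leq e^{(\zeta+1)^2/(2\tilde\sigma^2)} \cdot \tilde\sigma^2 \gamma^2 |s_1 - s_2|$. -/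
open MeasureTheory ProbabilityTheory Real
open scoped NNReal ENNReal
open Set

lemma gauss_toReal (m : ℝ) {v : ℝ≥0} (hv : v ≠ 0) (B : Set ℝ) :
    ((gaussianReal m v) B).toReal = ∫ x in B, gaussianPDFReal m v x := by
  rw [gaussianReal_apply_eq_integral m hv B,
    ENNReal.toReal_ofReal (integral_nonneg fun x => gaussianPDFReal_nonneg _ _ _)]

lemma gauss_pdf_le (m : ℝ) (v : ℝ≥0) (x : ℝ) :
    gaussianPDFReal m v x ≤ (√(2 * π * v))⁻¹ := by
  rw [gaussianPDFReal]
  calc (√(2 * π * v))⁻¹ * rexp (-(x - m) ^ 2 / (2 * v))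
      ≤ (√(2 * π * v))⁻¹ * 1 :=
        mul_le_mul_of_nonneg_left (Real.exp_le_one_iff.mpr (by
          rw [neg_div]; exact neg_nonpos.mpr (by positivity))) (by positivity)
    _ = (√(2 * π * v))⁻¹ := mul_one _

lemma gauss_interval_bound (m : ℝ) {v : ℝ≥0} (hv : v ≠ 0) {a b : ℝ} (hab : a ≤ b)
    (B : Set ℝ) (hBm : MeasurableSet B) (hBs : B ⊆ Set.Icc a b) :
    ((gaussianReal m v) B).toReal ≤ (b - a) * (√(2 * π * v))⁻¹ := by
  have hvolB : volume B ≤ ENNReal.ofReal (b - a) := by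
    rw [← Real.volume_Icc]; exact measure_mono hBs
  have hvol : (volume B).toReal ≤ b - a := by
    refine le_trans (ENNReal.toReal_mono ENNReal.ofReal_ne_top hvolB) ?_
    rw [ENNReal.toReal_ofReal (by linarith)]
  rw [gauss_toReal m hv]
  calc ∫ x in B, gaussianPDFReal m v x
      ≤ ∫ _x in B, (√(2 * π * (v:ℝ)))⁻¹ := by
        refine setIntegral_mono_on ((integrable_gaussianPDFReal m v).integrableOn) ?_ hBm
          (fun x _ => gauss_pdf_le m v x)
        exact integrableOn_const (hvolB.trans_lt ENNReal.ofReal_lt_top).ne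
    _ = (volume B).toReal * (√(2 * π * (v:ℝ)))⁻¹ := by
        rw [setIntegral_const, smul_eq_mul, measureReal_def]
    _ ≤ (b - a) * (√(2 * π * (v:ℝ)))⁻¹ := mul_le_mul_of_nonneg_right hvol (by positivity)

lemma gauss_diff_bound_aux {m₁ m₂ : ℝ} {v : ℝ≥0} (hv : v ≠ 0) (h : m₁ ≤ m₂)
    (B : Set ℝ) (hBm : MeasurableSet B) :
    ((gaussianReal m₁ v) B).toReal - ((gaussianReal m₂ v) B).toReal
      ≤ (m₂ - m₁) * (√(2 * π * v))⁻¹ := by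
  have hv' : (0:ℝ) < v := by positivity
  set f₁ := gaussianPDFReal m₁ v with hf₁
  set f₂ := gaussianPDFReal m₂ v with hf₂
  set c : ℝ := (m₁ + m₂) / 2 with hc
  set δ : ℝ := m₂ - m₁ with hδ
  have hδ0 : 0 ≤ δ := by simp [hδ]; linarith
  have hg : Integrable (fun x => f₁ x - f₂ x) :=
    (integrable_gaussianPDFReal m₁ v).sub (integrable_gaussianPDFReal m₂ v)
  have sign₁ : ∀ x ∈ Iic c, f₂ x ≤ f₁ x := by
    intro x hx
    simp only [hf₁, hf₂, gaussianPDFReal]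
    have hxc : x ≤ c := hx
    refine mul_le_mul_of_nonneg_left (Real.exp_le_exp.mpr ?_) (by positivity)
    apply div_le_div_of_nonneg_right _ (by positivity : (0:ℝ) ≤ 2 * v)
    nlinarith
  have sign₂ : ∀ x, x ∉ Iic c → f₁ x ≤ f₂ x := by
    intro x hx
    have hxc : c < x := lt_of_not_ge hx
    simp only [hf₁, hf₂, gaussianPDFReal]
    refine mul_le_mul_of_nonneg_left (Real.exp_le_exp.mpr ?_) (by positivity)
    apply div_le_div_of_nonneg_right _ (by positivity : (0:ℝ) ≤ 2 * v)
    nlinarith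
  have hint : ∀ (B' : Set ℝ), ∫ x in B', (f₁ x - f₂ x)
      = ((gaussianReal m₁ v) B').toReal - ((gaussianReal m₂ v) B').toReal := by
    intro B'
    rw [integral_sub (integrable_gaussianPDFReal m₁ v).integrableOn
      (integrable_gaussianPDFReal m₂ v).integrableOn, gauss_toReal m₁ hv, gauss_toReal m₂ hv]
  -- step M : restrict to the halfline
  have stepM : ((gaussianReal m₁ v) B).toReal - ((gaussianReal m₂ v) B).toReal
      ≤ ((gaussianReal m₁ v) (Iic c)).toReal - ((gaussianReal m₂ v) (Iic c)).toReal := by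
    rw [← hint B, ← hint (Iic c)]
    have hsplit : ∫ x in B, (f₁ x - f₂ x)
        = (∫ x in B ∩ Iic c, (f₁ x - f₂ x)) + ∫ x in B \ Iic c, (f₁ x - f₂ x) := by
      rw [← setIntegral_union (Set.disjoint_sdiff_right.mono_left Set.inter_subset_right)
        (hBm.diff measurableSet_Iic) hg.integrableOn hg.integrableOn,
        Set.inter_union_diff]
    rw [hsplit]
    have h1 : ∫ x in B \ Iic c, (f₁ x - f₂ x) ≤ 0 :=
      setIntegral_nonpos (hBm.diff measurableSet_Iic)
        (fun x hx => sub_nonpos.2 (sign₂ x hx.2))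
    have h2 : ∫ x in B ∩ Iic c, (f₁ x - f₂ x) ≤ ∫ x in Iic c, (f₁ x - f₂ x) :=
      setIntegral_mono_set hg.integrableOn
        ((ae_restrict_iff' measurableSet_Iic).2 (ae_of_all _
          (fun x hx => sub_nonneg.2 (sign₁ x hx))))
        (HasSubset.Subset.eventuallyLE Set.inter_subset_right)
    linarith
  -- translation
  have hmap : (gaussianReal m₂ v) (Iic c) = (gaussianReal m₁ v) (Iic (c - δ)) := by
    have h1 : gaussianReal m₂ v = (gaussianReal m₁ v).map (· + δ) := by
      rw [gaussianReal_map_add_const δ]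
      congr 1
      simp [hδ]
    rw [h1, Measure.map_apply (measurable_add_const δ) measurableSet_Iic]
    congr 1
    ext x
    simp [le_sub_iff_add_le]
  have hadd : (gaussianReal m₁ v) (Iic (c - δ)) + (gaussianReal m₁ v) (Ioc (c - δ) c)
      = (gaussianReal m₁ v) (Iic c) := by
    rw [← measure_union (Set.Iic_disjoint_Ioc le_rfl) measurableSet_Ioc,
      Set.Iic_union_Ioc_eq_Iic (by linarith)]
  have htr : ((gaussianReal m₁ v) (Iic c)).toReal - ((gaussianReal m₂ v) (Iic c)).toReal
      = ((gaussianReal m₁ v) (Ioc (c - δ) c)).toReal := by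
    rw [hmap, ← hadd, ENNReal.toReal_add (measure_ne_top _ _) (measure_ne_top _ _)]
    ring
  have hfin : ((gaussianReal m₁ v) (Ioc (c - δ) c)).toReal ≤ δ * (√(2 * π * v))⁻¹ := by
    have := gauss_interval_bound m₁ hv (show c - δ ≤ c by linarith)
      (Ioc (c - δ) c) measurableSet_Ioc Set.Ioc_subset_Icc_self
    simpa using this
  calc ((gaussianReal m₁ v) B).toReal - ((gaussianReal m₂ v) B).toReal
      ≤ ((gaussianReal m₁ v) (Iic c)).toReal - ((gaussianReal m₂ v) (Iic c)).toReal := stepM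
    _ = ((gaussianReal m₁ v) (Ioc (c - δ) c)).toReal := htr
    _ ≤ δ * (√(2 * π * v))⁻¹ := hfin

lemma prob_compl_toReal {μ : Measure ℝ} [IsProbabilityMeasure μ] {B : Set ℝ}
    (hB : MeasurableSet B) : (μ Bᶜ).toReal = 1 - (μ B).toReal := by
  rw [prob_compl_eq_one_sub hB, ENNReal.toReal_sub_of_le prob_le_one ENNReal.one_ne_top,
    ENNReal.toReal_one]

lemma gauss_diff_bound {m₁ m₂ : ℝ} {v : ℝ≥0} (hv : v ≠ 0)
    (B : Set ℝ) (hBm : MeasurableSet B) :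
    ((gaussianReal m₁ v) B).toReal - ((gaussianReal m₂ v) B).toReal
      ≤ |m₂ - m₁| * (√(2 * π * v))⁻¹ := by
  rcases le_total m₁ m₂ with h | h
  · have := gauss_diff_bound_aux hv h B hBm
    rwa [abs_of_nonneg (by linarith : (0:ℝ) ≤ m₂ - m₁)]
  · have h2 := gauss_diff_bound_aux hv h Bᶜ hBm.compl
    rw [prob_compl_toReal hBm, prob_compl_toReal hBm] at h2
    rw [abs_sub_comm, abs_of_nonneg (by linarith : (0:ℝ) ≤ m₁ - m₂)]
    linarith

lemma gauss_icc_lower (m ζ : ℝ) {v : ℝ≥0} (hv : v ≠ 0) (hζ : 0 ≤ ζ) (hmζ : |m| ≤ ζ) :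
    (√(2 * π * v))⁻¹ * rexp (-((ζ + 1)^2 / (2 * v)))
      ≤ ((gaussianReal m v) (Icc 0 1)).toReal := by
  have hv' : (0:ℝ) < v := by positivity
  rw [gauss_toReal m hv]
  have hm := abs_le.mp hmζ
  have key : ∀ x ∈ Icc (0:ℝ) 1,
      (√(2 * π * v))⁻¹ * rexp (-((ζ + 1)^2 / (2 * v))) ≤ gaussianPDFReal m v x := by
    intro x hx
    obtain ⟨hx0, hx1⟩ := hx
    rw [gaussianPDFReal]
    refine mul_le_mul_of_nonneg_left (Real.exp_le_exp.mpr ?_) (by positivity)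
    rw [neg_div]
    apply neg_le_neg
    apply div_le_div_of_nonneg_right _ (by positivity : (0:ℝ) ≤ 2 * v)
    nlinarith
  calc (√(2 * π * v))⁻¹ * rexp (-((ζ + 1)^2 / (2 * v)))
      = ∫ _x in Icc (0:ℝ) 1, (√(2 * π * (v:ℝ)))⁻¹ * rexp (-((ζ + 1)^2 / (2 * (v:ℝ)))) := by
        rw [setIntegral_const, smul_eq_mul, measureReal_def, Real.volume_Icc]
        norm_num
    _ ≤ ∫ x in Icc (0:ℝ) 1, gaussianPDFReal m v x := by
        refine setIntegral_mono_on ?_ (integrable_gaussianPDFReal m v).integrableOn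
          measurableSet_Icc key
        exact integrableOn_const (by rw [Real.volume_Icc]; exact ENNReal.ofReal_ne_top)

lemma cond_alg (a a' b b' K : ℝ) (ha : 0 ≤ a) (ha' : 0 ≤ a') (hb : 0 ≤ b) (hb' : 0 ≤ b')
    (hp : 0 < a + a') (hq : 0 < b + b') (h1 : |a - b| ≤ K) (h2 : |a' - b'| ≤ K) :
    |(a + a')⁻¹ * a - (b + b')⁻¹ * b| ≤ K / (a + a') := by
  have hrw : (a + a')⁻¹ * a - (b + b')⁻¹ * b = (a * b' - a' * b) / ((a + a') * (b + b')) := by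
    field_simp
    ring
  rw [hrw, abs_div, abs_of_pos (mul_pos hp hq)]
  have hnum : |a * b' - a' * b| ≤ K * (b + b') := by
    have : a * b' - a' * b = (a - b) * b' + b * (b' - a') := by ring
    rw [this]
    calc |(a - b) * b' + b * (b' - a')| ≤ |(a - b) * b'| + |b * (b' - a')| := abs_add_le _ _
      _ = |a - b| * b' + b * |a' - b'| := by
          rw [abs_mul, abs_mul, abs_of_nonneg hb', abs_of_nonneg hb, abs_sub_comm b' a']
      _ ≤ K * b' + b * K := by
          have hK : 0 ≤ K := le_trans (abs_nonneg _) h1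
          gcongr
      _ = K * (b + b') := by ring
  calc |a * b' - a' * b| / ((a + a') * (b + b'))
      ≤ (K * (b + b')) / ((a + a') * (b + b')) := by gcongr
    _ = K / (a + a') := by
        rw [div_eq_div_iff (mul_pos hp hq).ne' hp.ne']
        ring

theorem stmt_14 (σ γ y s₁ s₂ ζ : ℝ) (hσ : 0 < σ) (hγ : 0 < γ) (n : ℕ) (hn : 1 ≤ n)
    (hζ : 0 ≤ ζ)
    (σt2 m₁ m₂ : ℝ)
    (hσt2 : σt2 = (σ⁻¹^2 + n * γ^2)⁻¹)
    (hm₁ : m₁ = (σ⁻¹^2 + n * γ^2)⁻¹ * (σ⁻¹^2 * y + γ^2 * s₁))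
    (hm₂ : m₂ = (σ⁻¹^2 + n * γ^2)⁻¹ * (σ⁻¹^2 * y + γ^2 * s₂))
    (hm₁ζ : |m₁| ≤ ζ) (hm₂ζ : |m₂| ≤ ζ)
    (W₁ W₂ : Measure ℝ)
    (hW₁ : W₁ = (gaussianReal m₁ σt2.toNNReal)[|Set.Icc (0:ℝ) 1])
    (hW₂ : W₂ = (gaussianReal m₂ σt2.toNNReal)[|Set.Icc (0:ℝ) 1]) :
    tvDist W₁ W₂ ≤ Real.exp ((ζ + 1)^2 / (2 * σt2)) * σt2 * γ^2 * |s₁ - s₂| := by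
  have hσinv : 0 < σ⁻¹ := inv_pos.2 hσ
  have hden : 0 < σ⁻¹^2 + n * γ^2 := by positivity
  have hv : 0 < σt2 := hσt2 ▸ inv_pos.2 hden
  have ht : σt2.toNNReal ≠ 0 := (Real.toNNReal_pos.mpr hv).ne'
  have htv : ((σt2.toNNReal : ℝ≥0) : ℝ) = σt2 := Real.coe_toNNReal _ hv.le
  set t := σt2.toNNReal
  set I := Set.Icc (0:ℝ) 1 with hI
  set μ₁ := gaussianReal m₁ t with hμ₁
  set μ₂ := gaussianReal m₂ t with hμ₂
  have hsqrt : (0:ℝ) < √(2 * π * σt2) := Real.sqrt_pos.mpr (by positivity)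
  set K : ℝ := |m₂ - m₁| * (√(2 * π * σt2))⁻¹ with hK
  set L : ℝ := (√(2 * π * σt2))⁻¹ * rexp (-((ζ + 1)^2 / (2 * σt2))) with hLdef
  have hL : 0 < L := by positivity
  have hL₁ : L ≤ (μ₁ I).toReal := by
    have := gauss_icc_lower m₁ ζ ht hζ hm₁ζ
    rwa [htv] at this
  have hL₂ : L ≤ (μ₂ I).toReal := by
    have := gauss_icc_lower m₂ ζ ht hζ hm₂ζ
    rwa [htv] at this
  have hdiff : ∀ B : Set ℝ, MeasurableSet B → |(μ₁ B).toReal - (μ₂ B).toReal| ≤ K := by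
    intro B hB
    rw [abs_sub_le_iff]
    constructor
    · have := gauss_diff_bound (m₁ := m₁) (m₂ := m₂) ht B hB
      rwa [htv] at this
    · have := gauss_diff_bound (m₁ := m₂) (m₂ := m₁) ht B hB
      rwa [htv, abs_sub_comm m₁ m₂] at this
  have hKnn : 0 ≤ K := by positivity
  -- the key bound for each measurable set
  have key : ∀ A : Set ℝ, MeasurableSet A → |(W₁ A).toReal - (W₂ A).toReal| ≤ K / L := by
    intro A hA
    rw [hW₁, hW₂, cond_apply measurableSet_Icc _ A, cond_apply measurableSet_Icc _ A,
      ENNReal.toReal_mul, ENNReal.toReal_mul, ENNReal.toReal_inv, ENNReal.toReal_inv]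
    set a := (μ₁ (I ∩ A)).toReal with hadef
    set a' := (μ₁ (I \ A)).toReal with ha'def
    set b := (μ₂ (I ∩ A)).toReal with hbdef
    set b' := (μ₂ (I \ A)).toReal with hb'def
    have hsum₁ : a + a' = (μ₁ I).toReal := by
      rw [hadef, ha'def, ← ENNReal.toReal_add (measure_ne_top _ _) (measure_ne_top _ _),
        measure_inter_add_diff I hA]
    have hsum₂ : b + b' = (μ₂ I).toReal := by
      rw [hbdef, hb'def, ← ENNReal.toReal_add (measure_ne_top _ _) (measure_ne_top _ _),
        measure_inter_add_diff I hA]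
    have hp : 0 < a + a' := lt_of_lt_of_le hL (hsum₁ ▸ hL₁)
    have hq : 0 < b + b' := lt_of_lt_of_le hL (hsum₂ ▸ hL₂)
    have h1 : |a - b| ≤ K := hdiff (I ∩ A) (measurableSet_Icc.inter hA)
    have h2 : |a' - b'| ≤ K := hdiff (I \ A) (measurableSet_Icc.diff hA)
    have := cond_alg a a' b b' K ENNReal.toReal_nonneg ENNReal.toReal_nonneg
      ENNReal.toReal_nonneg ENNReal.toReal_nonneg hp hq h1 h2
    rw [hsum₁, hsum₂] at this
    calc |(μ₁ I).toReal⁻¹ * a - (μ₂ I).toReal⁻¹ * b| ≤ K / (a + a') := by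
          rw [← hsum₁, ← hsum₂] at this ⊢; exact this
      _ ≤ K / L := div_le_div_of_nonneg_left hKnn hL (hsum₁ ▸ hL₁)
  -- final computation
  have hδ : m₂ - m₁ = σt2 * (γ^2 * (s₂ - s₁)) := by
    rw [hm₁, hm₂, hσt2]; ring
  have hKeq : K = σt2 * γ^2 * |s₁ - s₂| * (√(2 * π * σt2))⁻¹ := by
    rw [hK, hδ, abs_mul, abs_mul, abs_of_nonneg hv.le, abs_of_nonneg (sq_nonneg γ),
      abs_sub_comm s₂ s₁]
    ring
  have hfinal : K / L = Real.exp ((ζ + 1)^2 / (2 * σt2)) * σt2 * γ^2 * |s₁ - s₂| := by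
    rw [hKeq, hLdef, Real.exp_neg]
    have he : Real.exp ((ζ + 1)^2 / (2 * σt2)) ≠ 0 := Real.exp_ne_zero _
    field_simp
  rw [tvDist, ← hfinal]
  haveI : Nonempty {A : Set ℝ // MeasurableSet A} := ⟨⟨∅, MeasurableSet.empty⟩⟩
  exact ciSup_le fun A => key A.1 A.2
end

section
/- (Gibbs' Wasserstein contraction, one-step) Consider the Gibbs sampler on $[0,1]^N$ that at each step selects a coordinate $i$ uniformly at random and resamples $x_i$ from a Normal distribution with mean $(\sigma^{-2}+n_i\gamma^2)^{-1}(\sigma^{-2}y_i + \gamma^2\sum_{j\sim i}x_j)$ and variance $(\sigma^{-2}+n_i\gamma^2)^{-1}$, truncated to $[0,1]$. With the metric $d(x,z)=\sum_i n_i|x_i - z_i|$, there exists a coupling of one step of two copies of the chain from states $x$ and $z$ such that the expected distance after one step is at most $(1 - N^{-1}(1+n_{max}\gamma^2\sigma^2)^{-1})\, d(x,z)$. -/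
open MeasureTheory ProbabilityTheory Set Filter
open scoped ENNReal NNReal

namespace Stmt17Aux



/-- Quantile function (clamped at 1). -/
noncomputable def qf (ν : Measure ℝ) (u : ℝ) : ℝ := sInf {t | min u 1 ≤ cdf ν t}

variable {ν : Measure ℝ} [IsProbabilityMeasure ν]

lemma cdf_of_neg (hs : ν (Icc 0 1) = 1) {t : ℝ} (ht : t < 0) : cdf ν t = 0 := by
  rw [cdf_eq_real, measureReal_def]
  have h0 : ν (Iic t) = 0 := by
    refine measure_mono_null (fun y hy => ?_) (?_ : ν (Icc (0:ℝ) 1)ᶜ = 0)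
    · simp only [mem_compl_iff, mem_Icc, not_and_or, not_le]
      exact Or.inl (lt_of_le_of_lt (mem_Iic.mp hy) ht)
    · rw [measure_compl measurableSet_Icc (measure_ne_top _ _), hs]
      simp
  simp [h0]

lemma cdf_of_one_le (hs : ν (Icc 0 1) = 1) {t : ℝ} (ht : (1:ℝ) ≤ t) : cdf ν t = 1 := by
  rw [cdf_eq_real, measureReal_def]
  have h1 : ν (Iic t) = 1 := by
    refine le_antisymm prob_le_one (le_trans hs.symm.le (measure_mono (fun y hy => le_trans hy.2 ht)))
  rw [h1, ENNReal.toReal_one]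

lemma qf_nonempty (hs : ν (Icc 0 1) = 1) (u : ℝ) :
    {t | min u 1 ≤ cdf ν t}.Nonempty :=
  ⟨1, by simpa [cdf_of_one_le hs le_rfl] using min_le_right u 1⟩

lemma qf_bddBelow (hs : ν (Icc 0 1) = 1) {u : ℝ} (hu : 0 < u) :
    BddBelow {t | min u 1 ≤ cdf ν t} := by
  refine ⟨0, fun t ht => ?_⟩
  by_contra h
  push_neg at h
  have h2 := le_trans ht.out (le_of_eq (cdf_of_neg hs h))
  have h3 : (0:ℝ) < min u 1 := lt_min hu one_pos
  linarith

lemma qf_nonneg (hs : ν (Icc 0 1) = 1) {u : ℝ} (hu : 0 < u) : 0 ≤ qf ν u := by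
  refine le_csInf (qf_nonempty hs u) (fun t ht => ?_)
  by_contra h
  push_neg at h
  have h2 := le_trans ht.out (le_of_eq (cdf_of_neg hs h))
  have h3 : (0:ℝ) < min u 1 := lt_min hu one_pos
  linarith

lemma qf_le_one (hs : ν (Icc 0 1) = 1) (u : ℝ) : qf ν u ≤ 1 := by
  rcases le_or_gt u 0 with hu | hu
  · have huniv : {t | min u 1 ≤ cdf ν t} = univ := by
      ext t
      simp only [mem_setOf_eq, mem_univ, iff_true]
      exact le_trans (le_trans (min_le_left _ _) hu) (cdf_nonneg ν t)
    rw [qf, huniv, Real.sInf_of_not_bddBelow not_bddBelow_univ]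
    norm_num
  · exact csInf_le (qf_bddBelow hs hu)
      (by simpa [cdf_of_one_le hs le_rfl] using min_le_right u 1)

lemma qf_mem_Icc (hs : ν (Icc 0 1) = 1) {u : ℝ} (hu : 0 < u) :
    qf ν u ∈ Icc (0:ℝ) 1 := ⟨qf_nonneg hs hu, qf_le_one hs u⟩

lemma qf_mono (hs : ν (Icc 0 1) = 1) : Monotone (qf ν) := by
  intro u u' huu'
  rcases le_or_gt u 0 with hu | hu
  · have huniv : {t | min u 1 ≤ cdf ν t} = univ := by
      ext t
      simp only [mem_setOf_eq, mem_univ, iff_true]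
      exact le_trans (le_trans (min_le_left _ _) hu) (cdf_nonneg ν t)
    rcases le_or_gt u' 0 with hu' | hu'
    · have huniv' : {t | min u' 1 ≤ cdf ν t} = univ := by
        ext t
        simp only [mem_setOf_eq, mem_univ, iff_true]
        exact le_trans (le_trans (min_le_left _ _) hu') (cdf_nonneg ν t)
      rw [qf, qf, huniv, huniv']
    · rw [qf, huniv, Real.sInf_of_not_bddBelow not_bddBelow_univ]
      exact qf_nonneg hs hu'
  · refine csInf_le_csInf (qf_bddBelow hs hu) (qf_nonempty hs u') (fun t ht => ?_)
    exact le_trans (min_le_min_right 1 huu') ht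

lemma le_cdf_qf (hs : ν (Icc 0 1) = 1) {u : ℝ} (hu : 0 < u) (hu1 : u ≤ 1) :
    u ≤ cdf ν (qf ν u) := by
  set x := qf ν u with hx
  by_contra h
  push_neg at h
  have rc : Tendsto (cdf ν) (nhdsWithin x (Ici x)) (nhds (cdf ν x)) :=
    (cdf ν).right_continuous x
  have hev : ∀ᶠ y in nhdsWithin x (Ici x), cdf ν y < u := rc.eventually_lt_const h
  obtain ⟨b, hb, hsub⟩ := mem_nhdsGE_iff_exists_Ico_subset.mp hev
  have hble : b ≤ x := by
    refine le_csInf (qf_nonempty hs u) (fun t ht => ?_)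
    by_contra htb
    push_neg at htb
    have hxt : x ≤ t := csInf_le (qf_bddBelow hs hu) ht
    have := hsub ⟨hxt, htb⟩
    rw [min_eq_left hu1] at ht
    exact absurd (lt_of_le_of_lt ht.out this) (lt_irrefl u)
  exact absurd (lt_of_lt_of_le hb hble) (lt_irrefl x)

lemma qf_le_iff (hs : ν (Icc 0 1) = 1) {u t : ℝ} (hu : 0 < u) (hu1 : u ≤ 1) :
    qf ν u ≤ t ↔ u ≤ cdf ν t := by
  constructor
  · intro h
    exact le_trans (le_cdf_qf hs hu hu1) (monotone_cdf ν h)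
  · intro h
    exact csInf_le (qf_bddBelow hs hu) (by rw [mem_setOf_eq, min_eq_left hu1]; exact h)

lemma map_qf (hs : ν (Icc 0 1) = 1) :
    (volume.restrict (Ioo (0:ℝ) 1)).map (qf ν) = ν := by
  have hmeas : Measurable (qf ν) := (qf_mono hs).measurable
  refine ((Measure.ext_of_Iic ν ((volume.restrict (Ioo (0:ℝ) 1)).map (qf ν))
    (fun t => ?_))).symm
  rw [Measure.map_apply hmeas measurableSet_Iic,
    Measure.restrict_apply (hmeas measurableSet_Iic)]
  have hset : qf ν ⁻¹' (Iic t) ∩ Ioo 0 1 = Iic (cdf ν t) ∩ Ioo 0 1 := by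
    ext u
    simp only [mem_inter_iff, mem_preimage, mem_Iic, mem_Ioo]
    constructor
    · rintro ⟨h1, h2⟩
      exact ⟨(qf_le_iff hs h2.1 h2.2.le).mp h1, h2⟩
    · rintro ⟨h1, h2⟩
      exact ⟨(qf_le_iff hs h2.1 h2.2.le).mpr h1, h2⟩
  rw [hset, ← ofReal_cdf]
  rcases le_or_gt 1 (cdf ν t) with hc | hc
  · have hc1 : cdf ν t = 1 := le_antisymm (cdf_le_one ν t) hc
    have h2 : Iic (cdf ν t) ∩ Ioo (0:ℝ) 1 = Ioo 0 1 := by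
      rw [hc1]
      ext u
      simp only [mem_inter_iff, mem_Iic, mem_Ioo]
      exact ⟨fun h => h.2, fun h => ⟨h.2.le, h⟩⟩
    rw [h2, hc1, Real.volume_Ioo]
    norm_num
  · have h2 : Iic (cdf ν t) ∩ Ioo (0:ℝ) 1 = Ioc 0 (cdf ν t) := by
      ext u
      simp only [mem_inter_iff, mem_Iic, mem_Ioo, mem_Ioc]
      exact ⟨fun h => ⟨h.2.1, h.1⟩, fun h => ⟨h.2, h.1, lt_of_le_of_lt h.2 hc⟩⟩
    rw [h2, Real.volume_Ioc]
    simp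



lemma gauss_Icc_ne_zero (m : ℝ) {v : ℝ≥0} (hv : v ≠ 0) {c d : ℝ} (hcd : c < d) :
    gaussianReal m v (Icc c d) ≠ 0 := by
  rw [gaussianReal_apply m hv]
  intro h0
  rw [lintegral_eq_zero_iff (measurable_gaussianPDF m v)] at h0
  have h1 : (volume.restrict (Icc c d)) {x | ¬ gaussianPDF m v x = 0} = 0 := ae_iff.mp h0
  have huniv : {x : ℝ | ¬ gaussianPDF m v x = 0} = univ :=
    eq_univ_of_forall (fun x => (gaussianPDF_pos m hv x).ne')
  rw [huniv, Measure.restrict_apply_univ, Real.volume_Icc] at h1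
  simp only [ENNReal.ofReal_eq_zero] at h1
  linarith

lemma aux_frac {A B C D : ℝ≥0∞} (hA : A ≠ ⊤) (hB : B ≠ ⊤) (hC : C ≠ ⊤) (hD : D ≠ ⊤)
    (hAB : A + B ≠ 0) (h : C * B ≤ A * D) : (C + D)⁻¹ * C ≤ (A + B)⁻¹ * A := by
  rcases eq_or_ne (C + D) 0 with h0 | h0
  · have hC0 : C = 0 := le_antisymm (h0 ▸ le_self_add) zero_le
    simp [hC0]
  · have hABt : A + B ≠ ⊤ := by simp [hA, hB, ENNReal.add_ne_top]
    have hCDt : C + D ≠ ⊤ := by simp [hC, hD, ENNReal.add_ne_top]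
    have key : C * (A + B) ≤ A * (C + D) := by
      rw [mul_add, mul_add, mul_comm C A]
      exact add_le_add_right h _
    calc (C + D)⁻¹ * C = (C + D)⁻¹ * C * ((A + B) * (A + B)⁻¹) := by
          rw [ENNReal.mul_inv_cancel hAB hABt, mul_one]
      _ = (A + B)⁻¹ * ((C + D)⁻¹ * (C * (A + B))) := by ring
      _ ≤ (A + B)⁻¹ * ((C + D)⁻¹ * (A * (C + D))) :=
          mul_le_mul_right (mul_le_mul_right key _) _
      _ = (A + B)⁻¹ * A * ((C + D)⁻¹ * (C + D)) := by ring
      _ = (A + B)⁻¹ * A := by rw [ENNReal.inv_mul_cancel h0 hCDt, mul_one]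

lemma cond_Iic_shift (ρ : Measure ℝ) [IsFiniteMeasure ρ] {δ s : ℝ} (hδ : 0 ≤ δ)
    (hI : ρ (Icc 0 1) ≠ 0) :
    (ρ (Icc δ (1+δ)))⁻¹ * ρ (Icc δ (1+δ) ∩ Iic s) ≤
      (ρ (Icc 0 1))⁻¹ * ρ (Icc 0 1 ∩ Iic s) := by
  rcases lt_or_ge s δ with hsδ | hsδ
  · have hempty : Icc δ (1+δ) ∩ Iic s = ∅ := by
      ext u
      simp only [mem_inter_iff, mem_Icc, mem_Iic, mem_empty_iff_false, iff_false, not_and]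
      intro h1 h2
      linarith [h1.1]
    simp [hempty]
  rcases le_or_gt 1 s with hs1 | hs1
  · have hfull : Icc (0:ℝ) 1 ∩ Iic s = Icc 0 1 :=
      inter_eq_left.mpr (fun u hu => le_trans hu.2 hs1)
    rw [hfull, ENNReal.inv_mul_cancel hI (measure_ne_top _ _)]
    calc (ρ (Icc δ (1+δ)))⁻¹ * ρ (Icc δ (1+δ) ∩ Iic s)
        ≤ (ρ (Icc δ (1+δ)))⁻¹ * ρ (Icc δ (1+δ)) :=
          mul_le_mul_right (measure_mono inter_subset_left) _
      _ ≤ 1 := by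
          rcases eq_or_ne (ρ (Icc δ (1+δ))) 0 with h0 | h0
          · simp [h0]
          · rw [ENNReal.inv_mul_cancel h0 (measure_ne_top _ _)]
  · -- δ ≤ s < 1
    have hsplitI : ρ (Icc 0 1 ∩ Iic s) + ρ (Icc 0 1 \ Iic s) = ρ (Icc 0 1) :=
      measure_inter_add_diff _ measurableSet_Iic
    have hsplitJ : ρ (Icc δ (1+δ) ∩ Iic s) + ρ (Icc δ (1+δ) \ Iic s) = ρ (Icc δ (1+δ)) :=
      measure_inter_add_diff _ measurableSet_Iic
    have hCA : ρ (Icc δ (1+δ) ∩ Iic s) ≤ ρ (Icc 0 1 ∩ Iic s) := by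
      refine measure_mono (fun u hu => ?_)
      refine ⟨⟨le_trans hδ hu.1.1, le_trans hu.2 hs1.le⟩, hu.2⟩
    have hBD : ρ (Icc 0 1 \ Iic s) ≤ ρ (Icc δ (1+δ) \ Iic s) := by
      refine measure_mono (fun u hu => ?_)
      have h2 : s < u := not_le.mp hu.2
      exact ⟨⟨le_trans hsδ h2.le, le_trans hu.1.2 (by linarith)⟩, hu.2⟩
    rw [← hsplitI, ← hsplitJ]
    exact aux_frac (measure_ne_top _ _) (measure_ne_top _ _) (measure_ne_top _ _)
      (measure_ne_top _ _) (by rw [hsplitI]; exact hI)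
      (mul_le_mul' hCA hBD)

lemma key_pdfReal {a b : ℝ} (hab : a ≤ b) {v : ℝ≥0} (hv : v ≠ 0) {x u : ℝ} (hxu : x ≤ u) :
    gaussianPDFReal b v x * gaussianPDFReal a v u ≤
      gaussianPDFReal a v x * gaussianPDFReal b v u := by
  have hvpos : (0:ℝ) < v := by positivity
  unfold gaussianPDFReal
  have hc : (0:ℝ) ≤ (Real.sqrt (2 * Real.pi * v))⁻¹ := by positivity
  calc (Real.sqrt (2 * Real.pi * v))⁻¹ * Real.exp (-(x - b)^2 / (2*v)) *
        ((Real.sqrt (2 * Real.pi * v))⁻¹ * Real.exp (-(u - a)^2 / (2*v)))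
      = (Real.sqrt (2 * Real.pi * v))⁻¹ * (Real.sqrt (2 * Real.pi * v))⁻¹ *
        Real.exp (-(x - b)^2 / (2*v) + -(u - a)^2 / (2*v)) := by
        rw [Real.exp_add]; ring
    _ ≤ (Real.sqrt (2 * Real.pi * v))⁻¹ * (Real.sqrt (2 * Real.pi * v))⁻¹ *
        Real.exp (-(x - a)^2 / (2*v) + -(u - b)^2 / (2*v)) := by
        refine mul_le_mul_of_nonneg_left (Real.exp_le_exp.mpr ?_) (by positivity)
        rw [← add_div, ← add_div]
        have h2v : (0:ℝ) < 2 * v := by positivity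
        rw [div_le_div_iff_of_pos_right h2v]
        nlinarith [mul_nonneg (sub_nonneg.2 hab) (sub_nonneg.2 hxu)]
    _ = (Real.sqrt (2 * Real.pi * v))⁻¹ * Real.exp (-(x - a)^2 / (2*v)) *
        ((Real.sqrt (2 * Real.pi * v))⁻¹ * Real.exp (-(u - b)^2 / (2*v))) := by
        rw [Real.exp_add]; ring

lemma key_pdf {a b : ℝ} (hab : a ≤ b) {v : ℝ≥0} (hv : v ≠ 0) {x u : ℝ} (hxu : x ≤ u) :
    gaussianPDF b v x * gaussianPDF a v u ≤ gaussianPDF a v x * gaussianPDF b v u := by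
  rw [gaussianPDF, gaussianPDF, gaussianPDF, gaussianPDF,
    ← ENNReal.ofReal_mul (gaussianPDFReal_nonneg b v x),
    ← ENNReal.ofReal_mul (gaussianPDFReal_nonneg a v x)]
  exact ENNReal.ofReal_le_ofReal (key_pdfReal hab hv hxu)

lemma cond_gauss_prob {a : ℝ} {v : ℝ≥0} (hv : v ≠ 0) :
    IsProbabilityMeasure ((gaussianReal a v)[|Icc 0 1]) :=
  cond_isProbabilityMeasure (gauss_Icc_ne_zero a hv one_pos)

lemma cond_gauss_Icc {a : ℝ} {v : ℝ≥0} (hv : v ≠ 0) :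
    ((gaussianReal a v)[|Icc 0 1]) (Icc 0 1) = 1 :=
  cond_apply_self (gauss_Icc_ne_zero a hv one_pos) (measure_ne_top _ _)

lemma cond_Iic_apply (a : ℝ) (v : ℝ≥0) (t : ℝ) :
    ((gaussianReal a v)[|Icc 0 1]) (Iic t)
      = (gaussianReal a v (Icc 0 1))⁻¹ * gaussianReal a v (Icc 0 1 ∩ Iic t) :=
  cond_apply measurableSet_Icc _ _

lemma cdf_cond_anti {a b : ℝ} (hab : a ≤ b) {v : ℝ≥0} (hv : v ≠ 0) (t : ℝ) :
    cdf ((gaussianReal b v)[|Icc 0 1]) t ≤ cdf ((gaussianReal a v)[|Icc 0 1]) t := by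
  haveI := cond_gauss_prob (a := a) hv
  haveI := cond_gauss_prob (a := b) hv
  rw [cdf_eq_real, cdf_eq_real, measureReal_def, measureReal_def, cond_Iic_apply, cond_Iic_apply]
  refine ENNReal.toReal_mono
    (ENNReal.mul_ne_top (ENNReal.inv_ne_top.mpr (gauss_Icc_ne_zero a hv one_pos))
      (measure_ne_top _ _)) ?_
  have hsplit : ∀ m : ℝ, gaussianReal m v (Icc 0 1 ∩ Iic t)
      + gaussianReal m v (Icc 0 1 \ Iic t) = gaussianReal m v (Icc 0 1) :=
    fun m => measure_inter_add_diff _ measurableSet_Iic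
  rw [← hsplit a, ← hsplit b]
  refine aux_frac (measure_ne_top _ _) (measure_ne_top _ _) (measure_ne_top _ _)
    (measure_ne_top _ _) (by rw [hsplit a]; exact gauss_Icc_ne_zero a hv one_pos) ?_
  -- core product inequality
  have hE : MeasurableSet (Icc (0:ℝ) 1 ∩ Iic t) := measurableSet_Icc.inter measurableSet_Iic
  have hF : MeasurableSet (Icc (0:ℝ) 1 \ Iic t) := measurableSet_Icc.diff measurableSet_Iic
  rw [gaussianReal_apply a hv, gaussianReal_apply b hv, gaussianReal_apply a hv,
    gaussianReal_apply b hv]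
  calc (∫⁻ x in Icc 0 1 ∩ Iic t, gaussianPDF b v x)
        * (∫⁻ u in Icc 0 1 \ Iic t, gaussianPDF a v u)
      = ∫⁻ x in Icc 0 1 ∩ Iic t,
          gaussianPDF b v x * ∫⁻ u in Icc 0 1 \ Iic t, gaussianPDF a v u :=
        (lintegral_mul_const _ (measurable_gaussianPDF b v)).symm
    _ ≤ ∫⁻ x in Icc 0 1 ∩ Iic t,
          gaussianPDF a v x * ∫⁻ u in Icc 0 1 \ Iic t, gaussianPDF b v u := by
        refine setLIntegral_mono ((measurable_gaussianPDF a v).mul_const _) (fun x hx => ?_)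
        calc gaussianPDF b v x * ∫⁻ u in Icc 0 1 \ Iic t, gaussianPDF a v u
            = ∫⁻ u in Icc 0 1 \ Iic t, gaussianPDF b v x * gaussianPDF a v u :=
              (lintegral_const_mul _ (measurable_gaussianPDF a v)).symm
          _ ≤ ∫⁻ u in Icc 0 1 \ Iic t, gaussianPDF a v x * gaussianPDF b v u := by
              refine setLIntegral_mono ((measurable_gaussianPDF b v).const_mul _)
                (fun u hu => key_pdf hab hv (le_trans hx.2 (not_le.mp hu.2).le))
          _ = gaussianPDF a v x * ∫⁻ u in Icc 0 1 \ Iic t, gaussianPDF b v u :=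
              lintegral_const_mul _ (measurable_gaussianPDF b v)
    _ = (∫⁻ x in Icc 0 1 ∩ Iic t, gaussianPDF a v x)
        * (∫⁻ u in Icc 0 1 \ Iic t, gaussianPDF b v u) :=
        lintegral_mul_const _ (measurable_gaussianPDF a v)

lemma cdf_cond_shift {a b : ℝ} (hab : a ≤ b) {v : ℝ≥0} (hv : v ≠ 0) (t : ℝ) :
    cdf ((gaussianReal a v)[|Icc 0 1]) t ≤ cdf ((gaussianReal b v)[|Icc 0 1]) (t + (b - a)) := by
  haveI := cond_gauss_prob (a := a) hv
  haveI := cond_gauss_prob (a := b) hv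
  set δ := b - a with hδdef
  have hδ : 0 ≤ δ := sub_nonneg.2 hab
  have hmap : (gaussianReal a v).map (· + δ) = gaussianReal b v := by
    rw [gaussianReal_map_add_const]
    congr 1
    rw [hδdef]; ring
  have happ : ∀ T : Set ℝ, MeasurableSet T →
      gaussianReal b v T = gaussianReal a v ((· + δ) ⁻¹' T) := by
    intro T hT
    rw [← hmap, Measure.map_apply (measurable_add_const δ) hT]
  have h1 : gaussianReal a v (Icc 0 1) = gaussianReal b v (Icc δ (1+δ)) := by
    rw [happ _ measurableSet_Icc]
    congr 1
    ext x
    simp only [mem_preimage, mem_Icc]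
    constructor <;> intro h <;> constructor <;> linarith [h.1, h.2]
  have h2 : gaussianReal a v (Icc 0 1 ∩ Iic t)
      = gaussianReal b v (Icc δ (1+δ) ∩ Iic (t+δ)) := by
    rw [happ _ ((measurableSet_Icc).inter measurableSet_Iic)]
    congr 1
    ext x
    simp only [mem_preimage, mem_inter_iff, mem_Icc, mem_Iic]
    constructor <;> intro h <;> refine ⟨⟨?_, ?_⟩, ?_⟩ <;> linarith [h.1.1, h.1.2, h.2]
  rw [cdf_eq_real, cdf_eq_real, measureReal_def, measureReal_def, cond_Iic_apply, cond_Iic_apply, h1, h2]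
  exact ENNReal.toReal_mono
    (ENNReal.mul_ne_top (ENNReal.inv_ne_top.mpr (gauss_Icc_ne_zero b hv one_pos))
      (measure_ne_top _ _))
    (cond_Iic_shift (gaussianReal b v) hδ (gauss_Icc_ne_zero b hv one_pos))

lemma coupling {a b : ℝ} (hab : a ≤ b) {v : ℝ≥0} (hv : v ≠ 0) :
    ∃ κ : Measure (ℝ × ℝ), IsProbabilityMeasure κ ∧
      κ.map Prod.fst = (gaussianReal a v)[|Icc 0 1] ∧
      κ.map Prod.snd = (gaussianReal b v)[|Icc 0 1] ∧
      ∀ᵐ p ∂κ, p.1 ∈ Icc (0:ℝ) 1 ∧ p.2 ∈ Icc (0:ℝ) 1 ∧ |p.1 - p.2| ≤ b - a := by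
  haveI := cond_gauss_prob (a := a) hv
  haveI := cond_gauss_prob (a := b) hv
  set νa := (gaussianReal a v)[|Icc 0 1] with hνa
  set νb := (gaussianReal b v)[|Icc 0 1] with hνb
  have hsa : νa (Icc 0 1) = 1 := cond_gauss_Icc hv
  have hsb : νb (Icc 0 1) = 1 := cond_gauss_Icc hv
  have hma : Measurable (qf νa) := (qf_mono hsa).measurable
  have hmb : Measurable (qf νb) := (qf_mono hsb).measurable
  have hpair : Measurable (fun u => (qf νa u, qf νb u)) := hma.prodMk hmb
  haveI : IsProbabilityMeasure (volume.restrict (Ioo (0:ℝ) 1)) := by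
    constructor
    rw [Measure.restrict_apply_univ, Real.volume_Ioo]
    norm_num
  have hset : MeasurableSet {p : ℝ × ℝ |
      p.1 ∈ Icc (0:ℝ) 1 ∧ p.2 ∈ Icc (0:ℝ) 1 ∧ |p.1 - p.2| ≤ b - a} := by
    refine IsClosed.measurableSet ?_
    refine IsClosed.inter (isClosed_Icc.preimage continuous_fst) ?_
    refine IsClosed.inter (isClosed_Icc.preimage continuous_snd) ?_
    exact isClosed_le (continuous_abs.comp (continuous_fst.sub continuous_snd)) continuous_const
  refine ⟨(volume.restrict (Ioo (0:ℝ) 1)).map (fun u => (qf νa u, qf νb u)),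
    Measure.isProbabilityMeasure_map hpair.aemeasurable, ?_, ?_, ?_⟩
  · rw [Measure.map_map measurable_fst hpair]
    exact map_qf hsa
  · rw [Measure.map_map measurable_snd hpair]
    exact map_qf hsb
  · refine (ae_map_iff hpair.aemeasurable hset).mpr ?_
    refine (ae_restrict_iff' measurableSet_Ioo).mpr (ae_of_all _ (fun u hu => ?_))
    have h1 := qf_mem_Icc hsa hu.1
    have h2 := qf_mem_Icc hsb hu.1
    have hle : qf νa u ≤ qf νb u := by
      refine csInf_le_csInf (qf_bddBelow hsa hu.1) (qf_nonempty hsb u) (fun t ht => ?_)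
      exact le_trans ht.out (cdf_cond_anti hab hv t)
    have hub : qf νb u ≤ qf νa u + (b - a) := by
      rw [qf_le_iff hsb hu.1 hu.2.le]
      exact le_trans (le_cdf_qf hsa hu.1 hu.2.le) (cdf_cond_shift hab hv (qf νa u))
    exact ⟨h1, h2, abs_le.mpr ⟨by linarith, by linarith⟩⟩

lemma coupling' (a b : ℝ) {v : ℝ≥0} (hv : v ≠ 0) :
    ∃ κ : Measure (ℝ × ℝ), IsProbabilityMeasure κ ∧
      κ.map Prod.fst = (gaussianReal a v)[|Icc 0 1] ∧
      κ.map Prod.snd = (gaussianReal b v)[|Icc 0 1] ∧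
      ∀ᵐ p ∂κ, p.1 ∈ Icc (0:ℝ) 1 ∧ p.2 ∈ Icc (0:ℝ) 1 ∧ |p.1 - p.2| ≤ |a - b| := by
  rcases le_total a b with hab | hab
  · obtain ⟨κ, h1, h2, h3, h4⟩ := coupling hab hv
    refine ⟨κ, h1, h2, h3, h4.mono (fun p hp => ⟨hp.1, hp.2.1, ?_⟩)⟩
    rw [abs_sub_comm a b, abs_of_nonneg (sub_nonneg.2 hab)]
    exact hp.2.2
  · obtain ⟨κ, h1, h2, h3, h4⟩ := coupling hab hv
    haveI := h1
    have hset : MeasurableSet {p : ℝ × ℝ |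
        p.1 ∈ Icc (0:ℝ) 1 ∧ p.2 ∈ Icc (0:ℝ) 1 ∧ |p.1 - p.2| ≤ |a - b|} := by
      refine IsClosed.measurableSet ?_
      refine IsClosed.inter (isClosed_Icc.preimage continuous_fst) ?_
      refine IsClosed.inter (isClosed_Icc.preimage continuous_snd) ?_
      exact isClosed_le (continuous_abs.comp (continuous_fst.sub continuous_snd)) continuous_const
    refine ⟨κ.map Prod.swap, Measure.isProbabilityMeasure_map measurable_swap.aemeasurable, ?_, ?_, ?_⟩
    · rw [Measure.map_map measurable_fst measurable_swap]
      exact h3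
    · rw [Measure.map_map measurable_snd measurable_swap]
      exact h2
    · refine (ae_map_iff measurable_swap.aemeasurable hset).mpr ?_
      refine h4.mono (fun p hp => ⟨hp.2.1, hp.1, ?_⟩)
      show |p.2 - p.1| ≤ |a - b|
      rw [abs_sub_comm p.2 p.1, abs_of_nonneg (sub_nonneg.2 hab)]
      exact hp.2.2

lemma map_finset_sum {ι α β : Type*} [MeasurableSpace α] [MeasurableSpace β]
    (s : Finset ι) (μ : ι → Measure α) {f : α → β} (hf : Measurable f) :
    (∑ i ∈ s, μ i).map f = ∑ i ∈ s, (μ i).map f := by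
  induction s using Finset.cons_induction with
  | empty => simp
  | cons a s ha ih => rw [Finset.sum_cons, Finset.sum_cons, Measure.map_add _ _ hf, ih]


end Stmt17Aux

open Stmt17Aux


theorem stmt_17 (N : ℕ) (hN : 0 < N)
    (Nb : Fin N → Finset (Fin N))                    -- neighbours of each pixel
    (hNb_symm : ∀ i j, j ∈ Nb i ↔ i ∈ Nb j) (hNb_irr : ∀ i, i ∉ Nb i)
    (hNb_pos : ∀ i, 1 ≤ (Nb i).card)
    (n : Fin N → ℕ) (hn : ∀ i, n i = (Nb i).card)    -- number of neighbours
    (nmax : ℕ) (hnmax : nmax = Finset.univ.sup n)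
    (σ γ : ℝ) (hσ : 0 < σ) (hγ : 0 < γ) (y : Fin N → ℝ)
    -- the full-conditional mean and variance at site `i` given the current state `x`
    (m : Fin N → (Fin N → ℝ) → ℝ)
    (hm : m = fun i x => (σ⁻¹^2 + (n i : ℝ) * γ^2)⁻¹ *
      (σ⁻¹^2 * y i + γ^2 * ∑ j ∈ Nb i, x j))
    (v : Fin N → NNReal) (hv : ∀ i, (v i : ℝ) = (σ⁻¹^2 + (n i : ℝ) * γ^2)⁻¹)
    -- one step of the Gibbs sampler from state `x`: choose a site uniformly at random and
    -- resample it from the Normal full conditional truncated to `[0,1]`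
    (step : (Fin N → ℝ) → Measure (Fin N → ℝ))
    (hstep : step = fun x => (N : ENNReal)⁻¹ •
      ∑ i : Fin N, Measure.map (fun t => Function.update x i t)
        ((gaussianReal (m i x) (v i))[|Set.Icc (0:ℝ) 1]))
    -- the metric
    (d : (Fin N → ℝ) → (Fin N → ℝ) → ℝ)
    (hd : d = fun x z => ∑ i, (n i : ℝ) * |x i - z i|)
    (x z : Fin N → ℝ) (hx : ∀ i, x i ∈ Set.Icc (0:ℝ) 1) (hz : ∀ i, z i ∈ Set.Icc (0:ℝ) 1) :
    ∃ c : Measure ((Fin N → ℝ) × (Fin N → ℝ)),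
      c.map Prod.fst = step x ∧ c.map Prod.snd = step z ∧
      ∫ p, d p.1 p.2 ∂c ≤ (1 - (N:ℝ)⁻¹ * (1 + (nmax:ℝ) * γ^2 * σ^2)⁻¹) * d x z := by
  classical
  subst hstep
  have hNR : (0:ℝ) < N := Nat.cast_pos.mpr hN
  have hσ2 : (0:ℝ) < σ⁻¹^2 := pow_pos (inv_pos.mpr hσ) 2
  have hvpos : ∀ i, (0:ℝ) < (v i : ℝ) := by
    intro i
    rw [hv i]
    have h2 : (0:ℝ) ≤ (n i:ℝ) * γ^2 := by positivity
    exact inv_pos.mpr (by linarith)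
  have hvne : ∀ i, v i ≠ 0 := by
    intro i h0
    have := hvpos i
    rw [h0] at this
    simp at this
  choose κ hκprob hκ1 hκ2 hκae using fun i : Fin N => coupling' (m i x) (m i z) (hvne i)
  set f : (Fin N → ℝ) × (Fin N → ℝ) → ℝ := fun p => d p.1 p.2 with hf
  set g : Fin N → ℝ × ℝ → (Fin N → ℝ) × (Fin N → ℝ) :=
    fun i p => (Function.update x i p.1, Function.update z i p.2) with hg
  have hgm : ∀ i, Measurable (g i) := fun i =>
    ((measurable_update x).comp measurable_fst).prodMk
      ((measurable_update z).comp measurable_snd)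
  have hfm : Measurable f := by
    have : f = fun p : (Fin N → ℝ) × (Fin N → ℝ) => ∑ j, (n j:ℝ) * |p.1 j - p.2 j| := by
      rw [hf, hd]
    rw [this]
    refine Finset.measurable_sum _ (fun j _ => ?_)
    exact measurable_const.mul
      ((((measurable_pi_apply j).comp measurable_fst).sub
        ((measurable_pi_apply j).comp measurable_snd)).abs)
  have hfnn : ∀ p, 0 ≤ f p := by
    intro p
    rw [hf, hd]
    exact Finset.sum_nonneg (fun j _ => mul_nonneg (Nat.cast_nonneg _) (abs_nonneg _))
  -- the pointwise identity
  have hdxz : ∀ i : Fin N, d x z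
      = ∑ j ∈ Finset.univ.erase i, (n j:ℝ) * |x j - z j| + (n i:ℝ) * |x i - z i| := by
    intro i
    rw [hd]
    exact (Finset.sum_erase_add _ _ (Finset.mem_univ i)).symm
  have hident : ∀ (i : Fin N) (p : ℝ × ℝ),
      f (g i p) = (d x z - (n i:ℝ) * |x i - z i|) + (n i:ℝ) * |p.1 - p.2| := by
    intro i p
    have h1 : f (g i p) = ∑ j, (n j:ℝ) *
        |Function.update x i p.1 j - Function.update z i p.2 j| := by
      rw [hf, hg, hd]
    rw [h1, ← Finset.sum_erase_add _ _ (Finset.mem_univ i), Function.update_self,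
      Function.update_self]
    have h2 : ∑ j ∈ Finset.univ.erase i, (n j:ℝ) *
        |Function.update x i p.1 j - Function.update z i p.2 j|
        = ∑ j ∈ Finset.univ.erase i, (n j:ℝ) * |x j - z j| :=
      Finset.sum_congr rfl (fun j hj => by
        rw [Function.update_of_ne (Finset.ne_of_mem_erase hj),
          Function.update_of_ne (Finset.ne_of_mem_erase hj)])
    rw [h2, hdxz i]
    ring
  -- integral bound on each coupling
  set B : Fin N → ℝ := fun i => d x z - (n i:ℝ) * |x i - z i| + (n i:ℝ) * |m i x - m i z|
    with hB
  have haeB : ∀ i, ∀ᵐ p ∂(κ i), f (g i p) ≤ B i := by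
    intro i
    refine (hκae i).mono (fun p hp => ?_)
    rw [hident i p, hB]
    have h3 : (n i:ℝ) * |p.1 - p.2| ≤ (n i:ℝ) * |m i x - m i z| :=
      mul_le_mul_of_nonneg_left hp.2.2 (Nat.cast_nonneg _)
    simp only
    linarith
  have hintg : ∀ i, Integrable (fun p => f (g i p)) (κ i) := by
    intro i
    haveI := hκprob i
    refine Integrable.mono' (integrable_const (B i))
      ((hfm.comp (hgm i)).aestronglyMeasurable) ?_
    refine (haeB i).mono (fun p hp => ?_)
    rw [Real.norm_eq_abs, abs_of_nonneg (hfnn _)]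
    exact hp
  have hIeq : ∀ i, ∫ p, f p ∂((κ i).map (g i)) = ∫ p, f (g i p) ∂(κ i) := fun i =>
    integral_map (hgm i).aemeasurable hfm.aestronglyMeasurable
  have hInt : ∀ i, Integrable f ((κ i).map (g i)) := fun i =>
    (integrable_map_measure hfm.aestronglyMeasurable (hgm i).aemeasurable).mpr (hintg i)
  have hIle : ∀ i, ∫ p, f p ∂((κ i).map (g i)) ≤ B i := by
    intro i
    haveI := hκprob i
    rw [hIeq i]
    calc ∫ p, f (g i p) ∂(κ i) ≤ ∫ _, B i ∂(κ i) :=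
          integral_mono_ae (hintg i) (integrable_const _) (haeB i)
      _ = B i := by simp
  -- the coupling measure
  refine ⟨(N : ENNReal)⁻¹ • ∑ i, (κ i).map (g i), ?_, ?_, ?_⟩
  · show _ = (N : ENNReal)⁻¹ • ∑ i : Fin N, Measure.map (fun t => Function.update x i t)
      ((gaussianReal (m i x) (v i))[|Icc 0 1])
    rw [Measure.map_smul, map_finset_sum _ _ measurable_fst]
    congr 1
    refine Finset.sum_congr rfl (fun i _ => ?_)
    rw [Measure.map_map measurable_fst (hgm i)]
    have hcomp : Prod.fst ∘ g i = (fun t => Function.update x i t) ∘ Prod.fst := rfl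
    rw [hcomp, ← Measure.map_map (measurable_update x) measurable_fst, hκ1 i]
  · show _ = (N : ENNReal)⁻¹ • ∑ i : Fin N, Measure.map (fun t => Function.update z i t)
      ((gaussianReal (m i z) (v i))[|Icc 0 1])
    rw [Measure.map_smul, map_finset_sum _ _ measurable_snd]
    congr 1
    refine Finset.sum_congr rfl (fun i _ => ?_)
    rw [Measure.map_map measurable_snd (hgm i)]
    have hcomp : Prod.snd ∘ g i = (fun t => Function.update z i t) ∘ Prod.snd := rfl
    rw [hcomp, ← Measure.map_map (measurable_update z) measurable_snd, hκ2 i]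
  · -- the integral bound
    rw [integral_smul_measure, integral_finset_sum_measure (fun i _ => hInt i)]
    set e : ℝ := (1 + (nmax:ℝ) * γ^2 * σ^2)⁻¹ with he
    have hDen : (0:ℝ) < 1 + (nmax:ℝ) * γ^2 * σ^2 := by positivity
    have hni : ∀ i, (n i:ℝ) ≤ (nmax:ℝ) := fun i =>
      Nat.cast_le.mpr (hnmax ▸ Finset.le_sup (Finset.mem_univ i))
    have hmdiff : ∀ i, |m i x - m i z|
        = (σ⁻¹^2 + (n i:ℝ)*γ^2)⁻¹ * γ^2 * |∑ j ∈ Nb i, (x j - z j)| := by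
      intro i
      have h1 : m i x - m i z
          = (σ⁻¹^2 + (n i:ℝ)*γ^2)⁻¹ * γ^2 * (∑ j ∈ Nb i, (x j - z j)) := by
        rw [hm]
        simp only
        rw [Finset.sum_sub_distrib]
        ring
      rw [h1, abs_mul, abs_of_nonneg (a := (σ⁻¹^2 + (n i:ℝ)*γ^2)⁻¹ * γ^2) (by positivity)]
    have hcoef : ∀ i, (n i:ℝ) * ((σ⁻¹^2 + (n i:ℝ)*γ^2)⁻¹ * γ^2) ≤ 1 - e := by
      intro i
      have hden : (0:ℝ) < σ⁻¹^2 + (n i:ℝ)*γ^2 := by positivity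
      have hinv : σ⁻¹^2 * σ^2 = 1 := by field_simp
      have h2 : 1 - e = ((nmax:ℝ)*γ^2*σ^2) / (1 + (nmax:ℝ)*γ^2*σ^2) := by
        rw [he]
        field_simp
        ring
      have h3 : (n i:ℝ) * ((σ⁻¹^2 + (n i:ℝ)*γ^2)⁻¹ * γ^2)
          = ((n i:ℝ) * γ^2) / (σ⁻¹^2 + (n i:ℝ)*γ^2) := by
        rw [div_eq_mul_inv]
        ring
      rw [h2, h3, div_le_div_iff₀ hden hDen]
      nlinarith [mul_nonneg (sub_nonneg.2 (hni i)) (sq_nonneg γ), sq_nonneg γ, sq_nonneg σ,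
        Nat.cast_nonneg (α := ℝ) (n i), Nat.cast_nonneg (α := ℝ) nmax]
    have hper : ∀ i, (n i:ℝ) * |m i x - m i z| ≤ (1 - e) * ∑ j ∈ Nb i, |x j - z j| := by
      intro i
      rw [hmdiff i]
      calc (n i:ℝ) * ((σ⁻¹^2 + (n i:ℝ)*γ^2)⁻¹ * γ^2 * |∑ j ∈ Nb i, (x j - z j)|)
          = ((n i:ℝ) * ((σ⁻¹^2 + (n i:ℝ)*γ^2)⁻¹ * γ^2)) * |∑ j ∈ Nb i, (x j - z j)| := by
            ring
        _ ≤ ((n i:ℝ) * ((σ⁻¹^2 + (n i:ℝ)*γ^2)⁻¹ * γ^2)) * ∑ j ∈ Nb i, |x j - z j| :=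
            mul_le_mul_of_nonneg_left (Finset.abs_sum_le_sum_abs _ _) (by positivity)
        _ ≤ (1 - e) * ∑ j ∈ Nb i, |x j - z j| :=
            mul_le_mul_of_nonneg_right (hcoef i)
              (Finset.sum_nonneg (fun j _ => abs_nonneg _))
    have hswap : ∑ i : Fin N, ∑ j ∈ Nb i, |x j - z j| = d x z := by
      calc ∑ i : Fin N, ∑ j ∈ Nb i, |x j - z j|
          = ∑ i : Fin N, ∑ j, if j ∈ Nb i then |x j - z j| else 0 := by
            refine Finset.sum_congr rfl (fun i _ => ?_)
            rw [Finset.sum_ite_mem, Finset.univ_inter]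
        _ = ∑ j : Fin N, ∑ i, if j ∈ Nb i then |x j - z j| else 0 := Finset.sum_comm
        _ = ∑ j : Fin N, ∑ i, if i ∈ Nb j then |x j - z j| else 0 := by
            refine Finset.sum_congr rfl (fun j _ => Finset.sum_congr rfl (fun i _ => ?_))
            exact if_congr (hNb_symm i j) rfl rfl
        _ = ∑ j : Fin N, (n j:ℝ) * |x j - z j| := by
            refine Finset.sum_congr rfl (fun j _ => ?_)
            rw [Finset.sum_ite_mem, Finset.univ_inter, Finset.sum_const, hn j,
              nsmul_eq_mul]
        _ = d x z := by rw [hd]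
    have hdsum : ∑ i : Fin N, (n i:ℝ) * |x i - z i| = d x z := by rw [hd]
    have hBsum : ∑ i, B i ≤ ((N:ℝ) - e) * d x z := by
      calc ∑ i, B i
          ≤ ∑ i, (d x z - (n i:ℝ) * |x i - z i| + (1 - e) * ∑ j ∈ Nb i, |x j - z j|) := by
            refine Finset.sum_le_sum (fun i _ => ?_)
            rw [hB]
            simp only
            linarith [hper i]
        _ = (N:ℝ) * d x z - d x z + (1-e) * d x z := by
            rw [Finset.sum_add_distrib, Finset.sum_sub_distrib, Finset.sum_const,
              ← Finset.mul_sum, hswap, hdsum, Finset.card_univ, Fintype.card_fin,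
              nsmul_eq_mul]
        _ = ((N:ℝ) - e) * d x z := by ring
    have htoReal : ((N:ENNReal)⁻¹).toReal = (N:ℝ)⁻¹ := by
      rw [ENNReal.toReal_inv]
      simp
    have hsum2 : ∑ i, ∫ p, f p ∂((κ i).map (g i)) ≤ ((N:ℝ) - e) * d x z :=
      le_trans (Finset.sum_le_sum (fun i _ => hIle i)) hBsum
    calc ((N:ENNReal)⁻¹).toReal • ∑ i, ∫ p, f p ∂((κ i).map (g i))
        = (N:ℝ)⁻¹ * ∑ i, ∫ p, f p ∂((κ i).map (g i)) := by rw [htoReal, smul_eq_mul]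
      _ ≤ (N:ℝ)⁻¹ * (((N:ℝ) - e) * d x z) :=
          mul_le_mul_of_nonneg_left hsum2 (inv_nonneg.mpr hNR.le)
      _ = (1 - (N:ℝ)⁻¹ * e) * d x z := by
          have hNne : (N:ℝ) ≠ 0 := hNR.ne'
          field_simp
          try ring
end
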